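/- Let (X, 𝔅, μ) be a σ-finite measure space, let E be an energy form on (X, μ) and let h ∈ D(E). The following are equivalent: (i) h is E-superharmonic: E(h, ψ) ≥ 0 for every ψ ∈ D(E) with ψ ≥ 0 μ-a.e., where E(f, g) := (E(f+g) − E(f−g))/4 is the polarized form computed from the finite real values; (ii) there exists g : X → ℝ with g ≤ h μ-a.e. such that E(h) = inf{ E(f) : f : X → ℝ with f ≥ g μ-a.e. }; (iii) E(h) = inf{ E(f) : f : X → ℝ with f ≥ h μ-a.e. }; (iv) for every f : X → ℝ, E(min(f, h)) ≤ E(f), the minimum taken pointwise. All infima are computed in [0,∞]. -/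

import Mathlib

open Filter MeasureTheory Topology
open scoped ENNReal

/-- Local convergence in `μ`-measure of a net (indexed by `ι`, along the filter `l`)
of functions `F i : X → ℝ` to `f : X → ℝ`. -/
def TendstoLocInMeasure {X : Type*} [MeasurableSpace X] (μ : Measure X)
    {ι : Type*} (l : Filter ι) (F : ι → X → ℝ) (f : X → ℝ) : Prop :=
  ∀ U : Set X, MeasurableSet U → μ U < ⊤ → ∀ ε : ℝ, 0 < ε →
    Tendsto (fun i => μ (U ∩ {x | ε ≤ |F i x - f x|})) l (𝓝 0)

/-- An energy form on `(X, μ)`: a map `E : (X → ℝ) → [0,∞]` which (1) only depends on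
`μ`-equivalence classes, (2) is a quadratic form (parallelogram identity and homogeneity),
(3) is lower semicontinuous with respect to local convergence in `μ`-measure of nets, and
(4) satisfies `E (C ∘ f) ≤ E f` for every normal contraction `C : ℝ → ℝ`. -/
def IsEnergyForm {X : Type*} [MeasurableSpace X] (μ : Measure X)
    (E : (X → ℝ) → ℝ≥0∞) : Prop :=
  (∀ f g : X → ℝ, f =ᵐ[μ] g → E f = E g) ∧
  (∀ f g : X → ℝ, 2 * E f + 2 * E g = E (f + g) + E (f - g)) ∧
  (∀ (c : ℝ) (f : X → ℝ), E (c • f) = ENNReal.ofReal (c ^ 2) * E f) ∧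
  (∀ (ι : Type*) [Preorder ι] [IsDirected ι (· ≤ ·)] [Nonempty ι]
    (F : ι → X → ℝ) (f : X → ℝ), TendstoLocInMeasure μ atTop F f →
      E f ≤ liminf (fun i => E (F i)) atTop) ∧
  (∀ C : ℝ → ℝ, C 0 = 0 → (∀ x y : ℝ, |C x - C y| ≤ |x - y|) →
    ∀ f : X → ℝ, E (C ∘ f) ≤ E f)

/-- The polarized bilinear form `E(f,g) = (E(f+g) - E(f-g))/4`, computed from the finite
real values of `E (f+g)` and `E (f-g)`. -/
noncomputable def polarForm {X : Type*} (E : (X → ℝ) → ℝ≥0∞) (f g : X → ℝ) : ℝ :=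
  ((E (f + g)).toReal - (E (f - g)).toReal) / 4

section Aux

variable {X : Type*} [MeasurableSpace X] {μ : Measure X} {E : (X → ℝ) → ℝ≥0∞}

lemma add_sub_ne_top (hE : IsEnergyForm μ E) {f g : X → ℝ}
    (hf : E f ≠ ⊤) (hg : E g ≠ ⊤) : E (f + g) ≠ ⊤ ∧ E (f - g) ≠ ⊤ := by
  have h := (hE.2.1 f g).symm
  have h2 : E (f + g) + E (f - g) ≠ ⊤ := by
    rw [h]
    exact ENNReal.add_ne_top.mpr ⟨ENNReal.mul_ne_top (by norm_num) hf,
      ENNReal.mul_ne_top (by norm_num) hg⟩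
  exact ENNReal.add_ne_top.mp h2

lemma par_toReal (hE : IsEnergyForm μ E) {f g : X → ℝ}
    (hf : E f ≠ ⊤) (hg : E g ≠ ⊤) :
    (E (f + g)).toReal + (E (f - g)).toReal = 2 * (E f).toReal + 2 * (E g).toReal := by
  obtain ⟨h1, h2⟩ := add_sub_ne_top hE hf hg
  have h := congrArg ENNReal.toReal (hE.2.1 f g)
  rw [ENNReal.toReal_add (ENNReal.mul_ne_top (by norm_num) hf)
      (ENNReal.mul_ne_top (by norm_num) hg),
    ENNReal.toReal_add h1 h2, ENNReal.toReal_mul, ENNReal.toReal_mul] at h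
  simp only [ENNReal.toReal_ofNat] at h
  linarith

lemma key1 (hE : IsEnergyForm μ E) {h ψ : X → ℝ} (hh : E h ≠ ⊤) (hψ : E ψ ≠ ⊤)
    (hp : 0 ≤ polarForm E h ψ) : E h ≤ E (h + ψ) := by
  have hD := par_toReal hE hh hψ
  unfold polarForm at hp
  have h1 := (add_sub_ne_top hE hh hψ).1
  rw [← ENNReal.toReal_le_toReal hh h1]
  have he0 : (0:ℝ) ≤ (E ψ).toReal := ENNReal.toReal_nonneg
  linarith

lemma key2 (hE : IsEnergyForm μ E) {h ψ : X → ℝ} (hh : E h ≠ ⊤) (hψ : E ψ ≠ ⊤)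
    (hmin : ∀ t : ℝ, 0 < t → E h ≤ E (h + t • ψ)) : 0 ≤ polarForm E h ψ := by
  have hsm : ∀ t : ℝ, E (t • ψ) ≠ ⊤ := fun t => by
    rw [hE.2.2.1]; exact ENNReal.mul_ne_top ENNReal.ofReal_ne_top hψ
  have hfin : ∀ t : ℝ, E (h + t • ψ) ≠ ⊤ := fun t => (add_sub_ne_top hE hh (hsm t)).1
  set e := (E ψ).toReal with hedef
  have he0 : (0:ℝ) ≤ e := ENNReal.toReal_nonneg
  set q : ℝ → ℝ := fun t => (E (h + t • ψ)).toReal with hqdef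
  set q0 := (E h).toReal with hq0def
  have hsmr : ∀ t : ℝ, (E (t • ψ)).toReal = t ^ 2 * e := fun t => by
    rw [hE.2.2.1, ENNReal.toReal_mul, ENNReal.toReal_ofReal (sq_nonneg t)]
  have hB : ∀ t : ℝ, q (2 * t) + q0 = 2 * q t + 2 * (t ^ 2 * e) := by
    intro t
    have h1 : (h + t • ψ) + t • ψ = h + (2 * t) • ψ := by
      rw [add_assoc, ← add_smul, two_mul]
    have h2 : (h + t • ψ) - t • ψ = h := add_sub_cancel_right h (t • ψ)
    have hp := par_toReal hE (hfin t) (hsm t)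
    rw [h1, h2, hsmr] at hp
    simp only [hqdef, hq0def]
    linarith
  set p : ℝ → ℝ := fun t => q t - q0 - t ^ 2 * e with hpdef
  have hC : ∀ t : ℝ, p (2 * t) = 2 * p t := by
    intro t
    simp only [hpdef]
    linear_combination hB t
  have hrec : ∀ n : ℕ, p 1 = 2 ^ n * p ((2:ℝ)⁻¹ ^ n) := by
    intro n
    induction n with
    | zero => simp
    | succ n ih =>
      have hx : (2:ℝ)⁻¹ ^ n = 2 * (2:ℝ)⁻¹ ^ (n + 1) := by
        rw [pow_succ]; ring
      rw [ih, hx, hC]; ring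
  have hlb : ∀ n : ℕ, -((2:ℝ)⁻¹ ^ n * e) ≤ p 1 := by
    intro n
    have ht : (0:ℝ) < (2:ℝ)⁻¹ ^ n := by positivity
    have hq1 : q0 ≤ q ((2:ℝ)⁻¹ ^ n) :=
      (ENNReal.toReal_le_toReal hh (hfin _)).mpr (hmin _ ht)
    have ha : (0:ℝ) < 2 ^ n := by positivity
    have hpw : (2:ℝ) ^ n * ((2:ℝ)⁻¹ ^ n) ^ 2 = (2:ℝ)⁻¹ ^ n := by
      rw [inv_pow]; field_simp
    have hexp : 2 ^ n * p ((2:ℝ)⁻¹ ^ n)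
        = 2 ^ n * (q ((2:ℝ)⁻¹ ^ n) - q0) - (2:ℝ)⁻¹ ^ n * e := by
      simp only [hpdef]
      linear_combination (-e) * hpw
    rw [hrec n, hexp]
    have := mul_nonneg ha.le (sub_nonneg.mpr hq1)
    linarith
  have htend : Tendsto (fun n : ℕ => -((2:ℝ)⁻¹ ^ n * e)) atTop (𝓝 0) := by
    have h2 := tendsto_pow_atTop_nhds_zero_of_lt_one
      (by norm_num : (0:ℝ) ≤ 2⁻¹) (by norm_num : (2:ℝ)⁻¹ < 1)
    simpa using (h2.mul_const e).neg
  have hP : 0 ≤ p 1 := le_of_tendsto' htend hlb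
  have hD := par_toReal hE hh hψ
  have hq1 : q 1 = (E (h + ψ)).toReal := by simp only [hqdef, one_smul]
  have hp1 : p 1 = q 1 - q0 - e := by simp [hpdef]
  unfold polarForm
  rw [hq1] at hp1
  simp only [hq0def, hedef] at hp1 hD ⊢
  linarith

lemma minmax (hE : IsEnergyForm μ E) (f h : X → ℝ) :
    E (fun x => min (f x) (h x)) + E (fun x => max (f x) (h x)) ≤ E f + E h := by
  set u : X → ℝ := (2⁻¹:ℝ) • (f + h) with hudef
  set v : X → ℝ := (2⁻¹:ℝ) • ((fun r : ℝ => |r|) ∘ (f - h)) with hvdef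
  have hmin : (fun x => min (f x) (h x)) = u - v := by
    funext x
    simp only [hudef, hvdef, Pi.sub_apply, Pi.smul_apply, Pi.add_apply, Function.comp_apply,
      smul_eq_mul]
    rcases le_total (f x) (h x) with hx | hx
    · rw [min_eq_left hx, abs_of_nonpos (by linarith)]; ring
    · rw [min_eq_right hx, abs_of_nonneg (by linarith)]; ring
  have hmax : (fun x => max (f x) (h x)) = u + v := by
    funext x
    simp only [hudef, hvdef, Pi.sub_apply, Pi.smul_apply, Pi.add_apply, Function.comp_apply,
      smul_eq_mul]
    rcases le_total (f x) (h x) with hx | hx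
    · rw [max_eq_right hx, abs_of_nonpos (by linarith)]; ring
    · rw [max_eq_left hx, abs_of_nonneg (by linarith)]; ring
  have hu : E u = ENNReal.ofReal 4⁻¹ * E (f + h) := by
    rw [hudef, hE.2.2.1]; norm_num
  have hv : E v ≤ ENNReal.ofReal 4⁻¹ * E (f - h) := by
    rw [hvdef, hE.2.2.1]
    have hc := hE.2.2.2.2 (fun r : ℝ => |r|) abs_zero (fun x y => abs_abs_sub_abs_le_abs_sub x y) (f - h)
    calc ENNReal.ofReal ((2:ℝ)⁻¹ ^ 2) * E ((fun r : ℝ => |r|) ∘ (f - h))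
        ≤ ENNReal.ofReal ((2:ℝ)⁻¹ ^ 2) * E (f - h) := mul_le_mul_right hc _
      _ = ENNReal.ofReal 4⁻¹ * E (f - h) := by norm_num
  have hpar := hE.2.1 u v
  have h4 : (4:ℝ≥0∞) * ENNReal.ofReal 4⁻¹ = 1 := by
    rw [show (4:ℝ≥0∞) = ENNReal.ofReal 4 from (ENNReal.ofReal_ofNat 4).symm,
      ← ENNReal.ofReal_mul (by norm_num)]
    norm_num
  calc E (fun x => min (f x) (h x)) + E (fun x => max (f x) (h x))
      = E (u + v) + E (u - v) := by rw [hmin, hmax]; ring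
    _ = 2 * E u + 2 * E v := hpar.symm
    _ ≤ 2 * (ENNReal.ofReal 4⁻¹ * E (f + h)) + 2 * (ENNReal.ofReal 4⁻¹ * E (f - h)) := by
        rw [hu]; exact add_le_add_right (mul_le_mul_right hv _) _
    _ = (2 * ENNReal.ofReal 4⁻¹) * (E (f + h) + E (f - h)) := by ring
    _ = (2 * ENNReal.ofReal 4⁻¹) * (2 * E f + 2 * E h) := by rw [← hE.2.1]
    _ = (4 * ENNReal.ofReal 4⁻¹) * E f + (4 * ENNReal.ofReal 4⁻¹) * E h := by ring
    _ = E f + E h := by rw [h4, one_mul, one_mul]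

end Aux

/-- characterization of superharmonic functions as minimizers of the
energy. -/
theorem stmt_15 {X : Type*} [MeasurableSpace X] (μ : Measure X) [SigmaFinite μ]
    (E : (X → ℝ) → ℝ≥0∞) (hE : IsEnergyForm μ E) (h : X → ℝ) (hh : E h < ⊤) :
    List.TFAE
      [∀ ψ : X → ℝ, E ψ < ⊤ → (∀ᵐ x ∂μ, 0 ≤ ψ x) → 0 ≤ polarForm E h ψ,
        ∃ g : X → ℝ, (∀ᵐ x ∂μ, g x ≤ h x) ∧
          E h = ⨅ (f : X → ℝ) (_ : ∀ᵐ x ∂μ, g x ≤ f x), E f,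
        E h = ⨅ (f : X → ℝ) (_ : ∀ᵐ x ∂μ, h x ≤ f x), E f,
        ∀ f : X → ℝ, E (fun x => min (f x) (h x)) ≤ E f] := by
  tfae_have 1 → 3 := by
    intro h1
    refine le_antisymm (le_iInf fun f => le_iInf fun hf => ?_)
      (iInf₂_le h (ae_of_all _ fun x => le_refl _))
    rcases eq_or_ne (E f) ⊤ with hEf | hEf
    · simp [hEf]
    · have hψfin : E (f - h) ≠ ⊤ := (add_sub_ne_top hE hEf hh.ne).2
      have hψpos : ∀ᵐ x ∂μ, 0 ≤ (f - h) x :=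
        hf.mono fun x hx => by simpa [Pi.sub_apply] using sub_nonneg.mpr hx
      have hpf := h1 (f - h) (lt_top_iff_ne_top.mpr hψfin) hψpos
      have hle := key1 hE hh.ne hψfin hpf
      rwa [show h + (f - h) = f from by abel] at hle
  tfae_have 3 → 2 := fun h3 => ⟨h, ae_of_all _ fun x => le_refl _, h3⟩
  tfae_have 2 → 1 := by
    rintro ⟨g, hgh, hmin⟩ ψ hψfin hψpos
    apply key2 hE hh.ne hψfin.ne
    intro t ht
    rw [hmin]
    refine iInf₂_le _ ?_
    filter_upwards [hgh, hψpos] with x h1 h2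
    have : 0 ≤ t * ψ x := mul_nonneg ht.le h2
    simp only [Pi.add_apply, Pi.smul_apply, smul_eq_mul]
    linarith
  tfae_have 3 → 4 := by
    intro h3 f
    have hmm := minmax hE f h
    have hmax : E h ≤ E (fun x => max (f x) (h x)) := by
      rw [h3]
      exact iInf₂_le (fun x => max (f x) (h x)) (ae_of_all _ fun x => le_max_right (f x) (h x))
    exact (ENNReal.add_le_add_iff_right hh.ne).mp
      (le_trans (add_le_add_right hmax _) hmm)
  tfae_have 4 → 3 := by
    intro h4
    refine le_antisymm (le_iInf fun f => le_iInf fun hf => ?_)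
      (iInf₂_le h (ae_of_all _ fun x => le_refl _))
    have heq : E h = E (fun x => min (f x) (h x)) :=
      hE.1 _ _ (hf.mono fun x hx => (min_eq_right hx).symm)
    rw [heq]; exact h4 f
  tfae_finish
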